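/- (a) For every integer k ≥ 3, the sequence a restricted to the range F_k ≤ n < F_{k+1} achieves its minimum uniquely at n = F_k; that is, a(n) > a(F_k) for all n with F_k < n < F_{k+1}. (b) For every integer k ≥ 5, a(F_k + 1) = a(F_k + 2), and for all n with F_k ≤ n < F_{k+1} we have a(n) ≤ a(F_k + 1), with equality only if n = F_k + 1 or n = F_k + 2. -/
import Mathlib

/-- The sequence A105774: `a n = n` for `n ≤ 1`, and
`a n = fib (j+1) - a (n - fib j)` where `j ≥ 2` is the unique index
with `fib j < n ≤ fib (j+1)` (realized as the greatest `j ≤ n` with `fib j < n`). -/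
def a (n : ℕ) : ℕ :=
  if _h : n ≤ 1 then n
  else
    Nat.fib (Nat.findGreatest (fun j => Nat.fib j < n) n + 1) -
      a (n - Nat.fib (Nat.findGreatest (fun j => Nat.fib j < n) n))
decreasing_by
  have h2 : 2 ≤ n := by omega
  have hj : 2 ≤ Nat.findGreatest (fun j => Nat.fib j < n) n :=
    Nat.le_findGreatest h2 (by show Nat.fib 2 < n; simp [Nat.fib_two]; omega)
  have hpos : 0 < Nat.fib (Nat.findGreatest (fun j => Nat.fib j < n) n) :=
    Nat.fib_pos.mpr (by omega)
  omega

lemma le_fib_add_one : ∀ j, j ≤ Nat.fib j + 1 := by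
  intro j
  induction j using Nat.strong_induction_on with
  | _ j ih =>
    match j with
    | 0 => simp
    | 1 => simp
    | (j+2) =>
      rcases Nat.eq_zero_or_pos j with rfl | hj
      · norm_num [Nat.fib]
      · have h1 := ih (j+1) (by omega)
        have h2 : 1 ≤ Nat.fib j := Nat.fib_pos.mpr hj
        rw [Nat.fib_add_two]; omega

lemma a_rec (j n : ℕ) (hj : 2 ≤ j) (h1 : Nat.fib j < n) (h2 : n ≤ Nat.fib (j+1)) :
    a n = Nat.fib (j+1) - a (n - Nat.fib j) := by
  have hfg : Nat.findGreatest (fun t => Nat.fib t < n) n = j := by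
    rw [Nat.findGreatest_eq_iff]
    refine ⟨?_, fun _ => h1, fun t ht htn => ?_⟩
    · have := le_fib_add_one j
      omega
    · show ¬ Nat.fib t < n
      have : Nat.fib (j+1) ≤ Nat.fib t := Nat.fib_mono ht
      omega
  have hn : ¬ n ≤ 1 := by
    have : 1 ≤ Nat.fib j := Nat.fib_pos.mpr (by omega)
    omega
  rw [a, dif_neg hn, hfg]

lemma a_one : a 1 = 1 := by rw [a]; simp

lemma a_two : a 2 = 1 := by
  rw [a_rec 2 2 le_rfl (by simp [Nat.fib_two]) (by norm_num [Nat.fib])]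
  norm_num [Nat.fib, a_one]

lemma a_three : a 3 = 2 := by
  rw [a_rec 3 3 (by norm_num) (by norm_num [Nat.fib]) (by norm_num [Nat.fib])]
  norm_num [Nat.fib, a_one]

lemma exists_fib_interval : ∀ m, 3 ≤ m → ∃ i, 3 ≤ i ∧ Nat.fib i < m ∧ m ≤ Nat.fib (i+1) := by
  intro m hm
  induction m with
  | zero => omega
  | succ m ih =>
    rcases Nat.lt_or_ge m 3 with h | h
    · have hm2 : m = 2 := by omega
      subst hm2
      exact ⟨3, by norm_num, by norm_num [Nat.fib], by norm_num [Nat.fib]⟩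
    · obtain ⟨i, hi3, hlt, hle⟩ := ih h
      rcases Nat.lt_or_ge m (Nat.fib (i+1)) with h' | h'
      · exact ⟨i, hi3, by omega, by omega⟩
      · refine ⟨i+1, by omega, by omega, ?_⟩
        have hfib : Nat.fib (i+1+1) = Nat.fib i + Nat.fib (i+1) := Nat.fib_add_two
        have hfi : 1 ≤ Nat.fib i := Nat.fib_pos.mpr (by omega)
        omega

lemma key : ∀ n j, 2 ≤ j → Nat.fib j < n → n ≤ Nat.fib (j+1) →
    (1 ≤ a n ∧ a n + 1 ≤ Nat.fib (j+1)) ∧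
    (Nat.fib j + 3 ≤ n → a n + 2 ≤ Nat.fib (j+1)) ∧
    (4 ≤ j → Nat.fib j + 1 ≤ a n) := by
  intro n
  induction n using Nat.strong_induction_on with
  | _ n ih =>
    intro j hj h1 h2
    have hadd : Nat.fib (j+1) = Nat.fib (j-1) + Nat.fib j := by
      have h := @Nat.fib_add_two (j-1)
      have e1 : j - 1 + 2 = j + 1 := by omega
      have e2 : j - 1 + 1 = j := by omega
      rw [e1, e2] at h; exact h
    have hrec := a_rec j n hj h1 h2
    set m := n - Nat.fib j with hmdef
    have hfj : 1 ≤ Nat.fib j := Nat.fib_pos.mpr (by omega)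
    have hm1 : 1 ≤ m := by omega
    have hm2 : m ≤ Nat.fib (j-1) := by omega
    -- bounds on a m
    have hb : 1 ≤ a m ∧ (3 ≤ m → 2 ≤ a m) ∧ a m ≤ Nat.fib (j-1) ∧
        (4 ≤ j → a m + 1 ≤ Nat.fib (j-1)) := by
      rcases Nat.lt_or_ge m 3 with h | h
      · have hf2 : 4 ≤ j → 2 ≤ Nat.fib (j-1) := fun h4 => by
          have : Nat.fib 3 ≤ Nat.fib (j-1) := Nat.fib_mono (by omega)
          simpa [Nat.fib] using this
        interval_cases m <;> simp [a_one, a_two] <;> omega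
      · obtain ⟨i, hi3, hilt, hile⟩ := exists_fib_interval m h
        have hij : i + 1 ≤ j - 1 := by
          by_contra hc
          have : Nat.fib (j-1) ≤ Nat.fib i := Nat.fib_mono (by omega)
          omega
        have hfle : Nat.fib (i+1) ≤ Nat.fib (j-1) := Nat.fib_mono (by omega)
        have hIH := ih m (by omega) i (by omega) hilt hile
        have h2am : 2 ≤ a m := by
          rcases Nat.lt_or_ge i 4 with hi4 | hi4
          · have hi : i = 3 := by omega
            subst hi
            have : m = 3 := by
              norm_num [Nat.fib] at hilt hile
              omega
            rw [this, a_three]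
          · have := hIH.2.2 hi4
            have : 2 ≤ Nat.fib i := by
              have h' : Nat.fib 3 ≤ Nat.fib i := Nat.fib_mono (by omega)
              simpa [Nat.fib] using h'
            omega
        exact ⟨by omega, fun _ => h2am, by omega, fun _ => by omega⟩
    obtain ⟨hb1, hb2, hb3, hb4⟩ := hb
    refine ⟨⟨by omega, by omega⟩, fun h3 => ?_, fun h4 => ?_⟩
    · have := hb2 (by omega); omega
    · have := hb4 h4; omega

lemma a_pos (x : ℕ) (hx : 1 ≤ x) : 1 ≤ a x := by
  rcases Nat.lt_or_ge x 3 with h | h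
  · interval_cases x
    · rw [a_one]
    · rw [a_two]
  · obtain ⟨i, hi3, hilt, hile⟩ := exists_fib_interval x h
    exact (key x i (by omega) hilt hile).1.1

lemma a_fib_lt (k : ℕ) (hk : 3 ≤ k) : a (Nat.fib k) + 1 ≤ Nat.fib k := by
  have e : k - 1 + 1 = k := by omega
  have hlt : Nat.fib (k-1) < Nat.fib k := by
    have h := Nat.fib_lt_fib_succ (n := k-1) (by omega)
    rwa [e] at h
  have hrec := a_rec (k-1) (Nat.fib k) (by omega) hlt (by rw [e])
  rw [e] at hrec
  have hsub : Nat.fib k - Nat.fib (k-1) = Nat.fib (k-2) := by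
    have h := @Nat.fib_add_two (k-2)
    rw [show k-2+2 = k by omega, show k-2+1 = k-1 by omega] at h
    omega
  rw [hsub] at hrec
  have hp := a_pos (Nat.fib (k-2)) (Nat.fib_pos.mpr (by omega))
  omega

/-- (a) For `k ≥ 3`, on the range `F k ≤ n < F (k+1)` the sequence `a` achieves
its minimum uniquely at `n = F k`. (b) For `k ≥ 5`, `a (F k + 1) = a (F k + 2)`,
and on that range `a` achieves its maximum only at `F k + 1` and `F k + 2`. -/
theorem a105774_min_max_on_fib_range (k : ℕ) :
    (3 ≤ k → ∀ n : ℕ, Nat.fib k < n → n < Nat.fib (k + 1) → a (Nat.fib k) < a n) ∧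
    (5 ≤ k → a (Nat.fib k + 1) = a (Nat.fib k + 2) ∧
      ∀ n : ℕ, Nat.fib k ≤ n → n < Nat.fib (k + 1) →
        a n ≤ a (Nat.fib k + 1) ∧
        (a n = a (Nat.fib k + 1) → n = Nat.fib k + 1 ∨ n = Nat.fib k + 2)) := by
  constructor
  · intro hk n hn1 hn2
    rcases Nat.lt_or_ge k 4 with h4 | h4
    · have hk3 : k = 3 := by omega
      subst hk3
      norm_num [Nat.fib] at hn1 hn2
      omega
    · have hlow := (key n k (by omega) hn1 (by omega)).2.2 h4
      have hup := a_fib_lt k hk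
      omega
  · intro hk
    have hadd : Nat.fib (k+1) = Nat.fib (k-1) + Nat.fib k := by
      have h := @Nat.fib_add_two (k-1)
      rw [show k-1+2 = k+1 by omega, show k-1+1 = k by omega] at h
      exact h
    have hf3 : 3 ≤ Nat.fib (k-1) := by
      have h : Nat.fib 4 ≤ Nat.fib (k-1) := Nat.fib_mono (by omega)
      have e : Nat.fib 4 = 3 := by decide
      omega
    have hfk : 2 ≤ Nat.fib k := by
      have h : Nat.fib 3 ≤ Nat.fib k := Nat.fib_mono (by omega)
      have e : Nat.fib 3 = 2 := by decide
      omega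
    have h1 : a (Nat.fib k + 1) = Nat.fib (k+1) - 1 := by
      have hrec := a_rec k (Nat.fib k + 1) (by omega) (by omega) (by omega)
      rw [show Nat.fib k + 1 - Nat.fib k = 1 by omega, a_one] at hrec
      exact hrec
    have h2 : a (Nat.fib k + 2) = Nat.fib (k+1) - 1 := by
      have hrec := a_rec k (Nat.fib k + 2) (by omega) (by omega) (by omega)
      rw [show Nat.fib k + 2 - Nat.fib k = 2 by omega, a_two] at hrec
      exact hrec
    refine ⟨by rw [h1, h2], fun n hn1 hn2 => ?_⟩
    rcases Nat.lt_or_ge n (Nat.fib k + 1) with h | h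
    · -- n = fib k
      have hn : n = Nat.fib k := by omega
      subst hn
      have := a_fib_lt k (by omega)
      constructor
      · omega
      · intro he; omega
    · rcases Nat.lt_or_ge n (Nat.fib k + 3) with h' | h'
      · rcases Nat.lt_or_ge n (Nat.fib k + 2) with h'' | h''
        · have hn : n = Nat.fib k + 1 := by omega
          subst hn
          exact ⟨le_rfl, fun _ => Or.inl rfl⟩
        · have hn : n = Nat.fib k + 2 := by omega
          subst hn
          rw [h1, h2]
          exact ⟨le_rfl, fun _ => Or.inr rfl⟩
      · have hup := (key n k (by omega) (by omega) (by omega)).2.1 h'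
        constructor
        · omega
        · intro he; omega
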